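/- arXiv:1204.2779 — 2 statements merged into one kernel-verified Lean document; each statement's English description precedes it below -/
import Mathlib

section
/- For every complex number q with |q| < 1, the infinite product ∏_{n=1}^∞ (1 − qⁿ)³ equals the convergent series Σ_{k=0}^∞ (−1)^k (2k+1) q^{k(k+1)/2}. -/
open Finset Filter Topology

noncomputable section Jacobi

/-- Gaussian binomial coefficient evaluated at `q`. -/
def gb (q : ℂ) : ℕ → ℕ → ℂ
  | 0, 0 => 1
  | 0, _+1 => 0
  | _+1, 0 => 1
  | m+1, k+1 => q ^ (k+1) * gb q m (k+1) + gb q m k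

/-- q-Pochhammer `(q;q)_n`. -/
def qp (q : ℂ) (n : ℕ) : ℂ := ∏ j ∈ Finset.range n, (1 - q ^ (j+1))

lemma gb_zero_right (q : ℂ) (m : ℕ) : gb q m 0 = 1 := by cases m <;> rfl

lemma gb_eq_zero (q : ℂ) : ∀ m k, m < k → gb q m k = 0 := by
  intro m
  induction m with
  | zero => intro k hk; match k, hk with | k+1, _ => rfl
  | succ m ih =>
    intro k hk
    match k, hk with
    | k+1, hk =>
      show q ^ (k+1) * gb q m (k+1) + gb q m k = 0
      rw [ih (k+1) (by omega), ih k (by omega)]; ring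

lemma gb_self (q : ℂ) (m : ℕ) : gb q m m = 1 := by
  induction m with
  | zero => rfl
  | succ m ih =>
    show q ^ (m+1) * gb q m (m+1) + gb q m m = 1
    rw [gb_eq_zero q m (m+1) (by omega), ih]; ring

lemma tri_succ (k : ℕ) : (k+1) * k / 2 + (k+1) = (k+1) * (k+2) / 2 := by
  have h : (k+1) * (k+2) = (k+1) * k + 2 * (k+1) := by ring
  rw [h, Nat.add_mul_div_left _ _ (by norm_num : 0 < 2)]

/-- Finite q-binomial theorem. -/
lemma qbt (q : ℂ) : ∀ m, ∀ z : ℂ,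
    ∏ j ∈ Finset.range m, (1 - z * q ^ j)
      = ∑ k ∈ Finset.range (m+1), (-1) ^ k * z ^ k * q ^ (k * (k-1) / 2) * gb q m k := by
  intro m
  induction m with
  | zero => intro z; simp [gb]
  | succ m ih =>
    intro z
    have key : ∏ j ∈ Finset.range (m+1), (1 - z * q ^ j)
        = (∑ k ∈ Finset.range (m+1), (-1) ^ k * z ^ k * q ^ (k * (k+1) / 2) * gb q m k)
          * (1 - z) := by
      rw [Finset.prod_range_succ' (fun j => 1 - z * q ^ j) m]
      have : ∀ j, 1 - z * q ^ (j+1) = 1 - (z * q) * q ^ j := by intro j; ring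
      simp only [this]
      rw [ih (z * q)]
      congr 1
      · apply Finset.sum_congr rfl
        intro k _
        have hzq : (z * q) ^ k = z ^ k * q ^ k := mul_pow z q k
        have hexp : q ^ k * q ^ (k * (k-1) / 2) = q ^ (k * (k+1) / 2) := by
          rw [← pow_add]
          congr 1
          cases k with
          | zero => rfl
          | succ k' =>
            show (k'+1) + (k'+1) * ((k'+1)-1) / 2 = (k'+1) * ((k'+1)+1) / 2
            simp only [Nat.add_sub_cancel]
            rw [Nat.add_comm]
            exact tri_succ k'
        rw [hzq]; rw [show (-1:ℂ)^k * (z^k * q^k) * q^(k*(k-1)/2) * gb q m k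
          = (-1)^k * z^k * (q^k * q^(k*(k-1)/2)) * gb q m k by ring, hexp]
      · simp [pow_zero]
    rw [key]
    -- now RHS manipulation
    set t : ℕ → ℂ := fun k => (-1) ^ k * z ^ k * q ^ (k * (k+1) / 2) * gb q m k with ht
    have hG : ∀ k, (-1:ℂ) ^ (k+1) * z ^ (k+1) * q ^ ((k+1) * k / 2) * gb q (m+1) (k+1)
        = t (k+1) - z * t k := by
      intro k
      show (-1:ℂ) ^ (k+1) * z ^ (k+1) * q ^ ((k+1) * k / 2)
          * (q ^ (k+1) * gb q m (k+1) + gb q m k) = _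
      rw [ht]
      simp only []
      have h1 : q ^ ((k+1)*k/2) * q ^ (k+1) = q ^ ((k+1)*(k+2)/2) := by
        rw [← pow_add, tri_succ]
      have h2 : (k+1) * (k+2) / 2 = (k+1)*((k+1)+1)/2 := by norm_num
      have h3 : (k+1) * k / 2 = k * (k+1) / 2 := by rw [Nat.mul_comm]
      rw [mul_add]
      rw [show (-1:ℂ)^(k+1) * z^(k+1) * q^((k+1)*k/2) * (q^(k+1) * gb q m (k+1))
        = (-1)^(k+1) * z^(k+1) * (q^((k+1)*k/2) * q^(k+1)) * gb q m (k+1) by ring, h1, h2]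
      rw [h3]
      rw [pow_succ (-1:ℂ) k, pow_succ z k]
      ring
    rw [Finset.sum_range_succ' (fun k => (-1:ℂ) ^ k * z ^ k * q ^ (k * (k-1) / 2) * gb q (m+1) k) (m+1)]
    have hred : ∀ k, (-1:ℂ) ^ (k+1) * z ^ (k+1) * q ^ ((k+1) * ((k+1)-1) / 2) * gb q (m+1) (k+1)
        = t (k+1) - z * t k := by
      intro k
      have : (k+1) - 1 = k := rfl
      rw [this]; exact hG k
    simp only [hred]
    rw [Finset.sum_sub_distrib]
    have hshift : ∑ k ∈ Finset.range (m+1), t (k+1)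
        = (∑ k ∈ Finset.range (m+1), t k) + t (m+1) - t 0 := by
      rw [← Finset.sum_range_succ]
      rw [Finset.sum_range_succ' t (m+1)]
      ring
    rw [hshift]
    have ht0 : t 0 = 1 := by simp [ht, gb_zero_right]
    have htm : t (m+1) = 0 := by
      simp only [ht]
      rw [gb_eq_zero q m (m+1) (by omega)]; ring
    rw [ht0, htm]
    rw [← Finset.mul_sum]
    simp [gb_zero_right]
    ring


variable {q : ℂ}

lemma qp_succ (n : ℕ) : qp q (n+1) = qp q n * (1 - q ^ (n+1)) := Finset.prod_range_succ _ n

lemma qp_ne_zero (hqj : ∀ j : ℕ, 1 - q ^ (j+1) ≠ 0) (n : ℕ) : qp q n ≠ 0 := by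
  induction n with
  | zero => simp [qp]
  | succ n ih => rw [qp_succ]; exact mul_ne_zero ih (hqj n)

lemma gb_closed (hqj : ∀ j : ℕ, 1 - q ^ (j+1) ≠ 0) : ∀ m k, k ≤ m → gb q m k * (qp q k * qp q (m-k)) = qp q m := by
  intro m
  induction m with
  | zero => intro k hk; interval_cases k; simp [gb, qp]
  | succ m ih =>
    intro k hk
    match k with
    | 0 => simp [gb_zero_right, qp]
    | k+1 =>
      show (q ^ (k+1) * gb q m (k+1) + gb q m k) * (qp q (k+1) * qp q (m+1-(k+1))) = qp q (m+1)
      rcases Nat.lt_or_ge (k+1) (m+1) with h | h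
      · have hk1m : k + 1 ≤ m := by omega
        have hkm : k ≤ m := by omega
        have e1 : m + 1 - (k+1) = (m - (k+1)) + 1 := by omega
        have e2 : m - k = (m - (k+1)) + 1 := by omega
        have h1 := ih (k+1) hk1m
        have h2 := ih k hkm
        -- qp (m - k) = qp (m-(k+1)) * (1 - q^(m-k))
        have e3 : qp q (m - k) = qp q (m - (k+1)) * (1 - q ^ ((m-(k+1))+1)) := by
          rw [e2, qp_succ]
        have e4 : qp q (k+1) = qp q k * (1 - q ^ (k+1)) := qp_succ k
        have e5 : qp q (m+1) = qp q m * (1 - q ^ (m+1)) := qp_succ m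
        have e6 : (m - (k+1)) + 1 + (k + 1) = m + 1 := by omega
        -- key scalar identity: q^(k+1) * (1 - q^(m-k)) + (1 - q^(k+1)) = 1 - q^(m+1)
        have key : q ^ (k+1) * (1 - q ^ ((m-(k+1))+1)) + (1 - q ^ (k+1)) = 1 - q ^ (m+1) := by
          have : q ^ (k+1) * q ^ ((m-(k+1))+1) = q ^ (m+1) := by
            rw [← pow_add]; congr 1; omega
          rw [mul_sub, mul_one, this]; ring
        rw [e1, qp_succ (m - (k+1)), e5, ← key]
        rw [add_mul, mul_add]
        congr 1
        · -- q^(k+1) * gb m (k+1) * (qp(k+1) * (qp(m-(k+1)) * (1-q^..))) = qp m * (q^(k+1) * (1-q^..))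
          have : m - (k+1) = m - (k+1) := rfl
          calc q ^ (k+1) * gb q m (k+1) * (qp q (k+1) * (qp q (m-(k+1)) * (1 - q ^ ((m-(k+1))+1))))
              = (gb q m (k+1) * (qp q (k+1) * qp q (m-(k+1)))) * (q^(k+1) * (1 - q ^ ((m-(k+1))+1))) := by ring
            _ = qp q m * (q^(k+1) * (1 - q ^ ((m-(k+1))+1))) := by rw [h1]
            _ = _ := by ring
        · calc gb q m k * (qp q (k+1) * (qp q (m-(k+1)) * (1 - q ^ ((m-(k+1))+1))))
              = gb q m k * (qp q k * (1 - q^(k+1)) * (qp q (m-(k+1)) * (1 - q ^ ((m-(k+1))+1)))) := by rw [← e4]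
            _ = (gb q m k * (qp q k * (qp q (m-(k+1)) * (1 - q ^ ((m-(k+1))+1))))) * (1 - q^(k+1)) := by ring
            _ = (gb q m k * (qp q k * qp q (m - k))) * (1 - q^(k+1)) := by rw [e3]
            _ = qp q m * (1 - q ^ (k+1)) := by rw [h2]
      · have hkm : k = m := by omega
        subst hkm
        rw [gb_eq_zero q k (k+1) (by omega), gb_self]
        have h0 : qp q 0 = 1 := by simp [qp]
        rw [Nat.sub_self, h0, qp_succ]
        ring

lemma gb_symm (hqj : ∀ j : ℕ, 1 - q ^ (j+1) ≠ 0) {m k : ℕ} (hk : k ≤ m) : gb q m k = gb q m (m - k) := by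
  have h1 := gb_closed hqj m k hk
  have h2 := gb_closed hqj m (m-k) (by omega)
  have e : m - (m - k) = k := by omega
  rw [e] at h2
  have hne : qp q k * qp q (m-k) ≠ 0 := mul_ne_zero (qp_ne_zero hqj k) (qp_ne_zero hqj (m-k))
  have := h1.trans h2.symm
  rw [mul_comm (qp q (m-k)) (qp q k)] at this
  exact mul_right_cancel₀ hne this


lemma htri (a : ℕ) : 2 * (a*(a+1)/2) = a*(a+1) :=
  Nat.mul_div_cancel' (Nat.even_mul_succ_self a).two_dvd

lemma qexp (hq0 : q ≠ 0) {a b c d : ℕ} (h : a + d = c + b) :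
    q ^ a * (q⁻¹) ^ b = q ^ c * (q⁻¹) ^ d := by
  have hb : (q : ℂ) ^ b ≠ 0 := pow_ne_zero _ hq0
  have hd : (q : ℂ) ^ d ≠ 0 := pow_ne_zero _ hq0
  have hcan : ∀ t : ℕ, (q⁻¹) ^ t * q ^ t = 1 := fun t => by
    rw [← mul_pow, inv_mul_cancel₀ hq0, one_pow]
  apply mul_right_cancel₀ (mul_ne_zero hb hd)
  calc q ^ a * (q⁻¹) ^ b * (q ^ b * q ^ d)
      = (q ^ a * q ^ d) * ((q⁻¹) ^ b * q ^ b) := by ring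
    _ = q ^ (a + d) := by rw [hcan, ← pow_add, mul_one]
    _ = q ^ (c + b) := by rw [h]
    _ = (q ^ c * q ^ b) * ((q⁻¹) ^ d * q ^ d) := by rw [hcan, ← pow_add, mul_one]
    _ = q ^ c * (q⁻¹) ^ d * (q ^ b * q ^ d) := by ring

lemma neg_one_pow_sq (j : ℕ) : (-1 : ℂ) ^ j * (-1) ^ j = 1 := by
  rw [← pow_add, ← two_mul, pow_mul]; norm_num

lemma neg_one_pow_sub {j n : ℕ} (h : j ≤ n) : (-1 : ℂ) ^ (n - j) = (-1) ^ n * (-1) ^ j := by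
  have h1 : (-1 : ℂ) ^ (n - j) * (-1) ^ j = (-1) ^ n := by
    rw [← pow_add, Nat.sub_add_cancel h]
  calc (-1 : ℂ) ^ (n - j) = (-1 : ℂ) ^ (n - j) * ((-1) ^ j * (-1) ^ j) := by
        rw [neg_one_pow_sq, mul_one]
    _ = ((-1 : ℂ) ^ (n - j) * (-1) ^ j) * (-1) ^ j := by ring
    _ = _ := by rw [h1]

lemma qp_inv (hq0 : q ≠ 0) (n : ℕ) :
    qp q⁻¹ n = (-1) ^ n * (q⁻¹) ^ (n * (n+1) / 2) * qp q n := by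
  induction n with
  | zero => simp [qp]
  | succ n ih =>
    have hfac : 1 - (q⁻¹) ^ (n+1) = -(q⁻¹) ^ (n+1) * (1 - q ^ (n+1)) := by
      have h1 : (q⁻¹) ^ (n+1) * q ^ (n+1) = 1 := by
        rw [← mul_pow, inv_mul_cancel₀ hq0, one_pow]
      rw [neg_mul, mul_sub, mul_one, h1]; ring
    rw [qp_succ, qp_succ, ih, hfac]
    have hexp : (q⁻¹) ^ (n * (n+1) / 2) * (q⁻¹) ^ (n+1) = (q⁻¹) ^ ((n+1) * ((n+1)+1) / 2) := by
      rw [← pow_add]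
      congr 1
      have t1 := htri n
      have t2 := htri (n+1)
      have r1 : n*(n+1) = n*n + n := by ring
      have r2 : (n+1)*((n+1)+1) = n*n + 3*n + 2 := by ring
      omega
    calc (-1:ℂ) ^ n * (q⁻¹) ^ (n * (n+1) / 2) * qp q n * (-(q⁻¹) ^ (n+1) * (1 - q ^ (n+1)))
        = ((-1:ℂ) ^ n * (-1)) * ((q⁻¹) ^ (n * (n+1) / 2) * (q⁻¹) ^ (n+1)) * (qp q n * (1 - q ^ (n+1))) := by
          ring
      _ = _ := by rw [hexp, ← pow_succ]

theorem star (hq0 : q ≠ 0) (hqj : ∀ j : ℕ, 1 - q ^ (j+1) ≠ 0) (n : ℕ) :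
    ∑ j ∈ Finset.range (n+1),
        (-1 : ℂ) ^ j * (2 * (j : ℂ) + 1) * q ^ (j * (j+1) / 2) * gb q (2*n+1) (n - j)
      = qp q n ^ 2 := by
  set z₀ : ℂ := (q⁻¹) ^ n with hz₀
  set c : ℕ → ℂ := fun k => (-1) ^ k * q ^ (k * (k-1) / 2) * gb q (2*n+1) k with hc
  -- the two functions
  have hFG : (fun z : ℂ => ∏ j ∈ Finset.range (2*n+1), (1 - z * q ^ j))
      = (fun z : ℂ => ∑ k ∈ Finset.range (2*n+2), c k * z ^ k) := by
    funext z
    rw [qbt q (2*n+1) z]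
    exact Finset.sum_congr rfl fun k _ => by rw [hc]; ring
  -- derivatives
  have h1 : HasDerivAt (fun z : ℂ => ∏ j ∈ Finset.range (2*n+1), (1 - z * q ^ j))
      (∑ i ∈ Finset.range (2*n+1),
        (∏ j ∈ (Finset.range (2*n+1)).erase i, (1 - z₀ * q ^ j)) • (-q ^ i)) z₀ := by
    apply HasDerivAt.fun_finsetProd
    intro i _
    have := (hasDerivAt_const z₀ (1:ℂ)).fun_sub ((hasDerivAt_id z₀).mul_const (q ^ i))
    simpa using this
  have h2 : HasDerivAt (fun z : ℂ => ∑ k ∈ Finset.range (2*n+2), c k * z ^ k)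
      (∑ k ∈ Finset.range (2*n+2), c k * ((k : ℂ) * z₀ ^ (k-1))) z₀ := by
    apply HasDerivAt.fun_sum
    intro k _
    exact (hasDerivAt_pow k z₀).const_mul (c k)
  have hD : (∑ i ∈ Finset.range (2*n+1),
        (∏ j ∈ (Finset.range (2*n+1)).erase i, (1 - z₀ * q ^ j)) • (-q ^ i))
      = ∑ k ∈ Finset.range (2*n+2), c k * ((k : ℂ) * z₀ ^ (k-1)) := by
    have e1 := h1.deriv
    have e2 := h2.deriv
    rw [hFG] at e1
    rw [← e1, ← e2]
  -- compute product side
  have hq1 : (q⁻¹) ^ n * q ^ n = 1 := by rw [← mul_pow, inv_mul_cancel₀ hq0, one_pow]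
  have hDP : (∑ i ∈ Finset.range (2*n+1),
        (∏ j ∈ (Finset.range (2*n+1)).erase i, (1 - z₀ * q ^ j)) • (-q ^ i))
      = (-1) ^ (n+1) * q ^ n * (q⁻¹) ^ (n * (n+1) / 2) * qp q n ^ 2 := by
    rw [Finset.sum_eq_single_of_mem n (Finset.mem_range.mpr (by omega))]
    · -- the i = n term
      have hsplit : (Finset.range (2*n+1)).erase n
          = Finset.range n ∪ Finset.Ico (n+1) (2*n+1) := by
        ext a
        simp only [Finset.mem_erase, Finset.mem_range, Finset.mem_union, Finset.mem_Ico]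
        omega
      have hdisj : Disjoint (Finset.range n) (Finset.Ico (n+1) (2*n+1)) := by
        rw [Finset.disjoint_left]
        intro a ha hb
        simp only [Finset.mem_range] at ha
        simp only [Finset.mem_Ico] at hb
        omega
      rw [hsplit, Finset.prod_union hdisj]
      have hA : ∏ j ∈ Finset.range n, (1 - z₀ * q ^ j) = qp q⁻¹ n := by
        rw [← Finset.prod_range_reflect (fun j => 1 - z₀ * q ^ j) n]
        apply Finset.prod_congr rfl
        intro j hj
        simp only [Finset.mem_range] at hj
        have : z₀ * q ^ (n - 1 - j) = (q⁻¹) ^ (j+1) := by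
          rw [hz₀]
          have hsum : (j+1) + (n-1-j) = n := by omega
          have : (q⁻¹) ^ n = (q⁻¹) ^ (j+1) * (q⁻¹) ^ (n-1-j) := by
            rw [← pow_add, hsum]
          rw [this, mul_assoc]
          have : (q⁻¹) ^ (n-1-j) * q ^ (n-1-j) = 1 := by
            rw [← mul_pow, inv_mul_cancel₀ hq0, one_pow]
          rw [this, mul_one]
        rw [this]
      have hB : ∏ j ∈ Finset.Ico (n+1) (2*n+1), (1 - z₀ * q ^ j) = qp q n := by
        rw [Finset.prod_Ico_eq_prod_range]
        have h2n : 2*n+1 - (n+1) = n := by omega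
        rw [h2n]
        apply Finset.prod_congr rfl
        intro i _
        have : z₀ * q ^ (n+1+i) = q ^ (i+1) := by
          rw [hz₀]
          have : q ^ (n+1+i) = q ^ n * q ^ (i+1) := by rw [← pow_add]; congr 1; omega
          rw [this, ← mul_assoc, hq1, one_mul]
        rw [this]
      rw [hA, hB, qp_inv hq0, smul_eq_mul]
      try ring
    · intro i hi hne
      have hmem : n ∈ (Finset.range (2*n+1)).erase i := by
        simp only [Finset.mem_erase, Finset.mem_range]
        exact ⟨fun h => hne h.symm, by omega⟩
      rw [Finset.prod_eq_zero hmem (by rw [hz₀, hq1]; ring), zero_smul]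
  -- compute sum side: split and reflect
  set F : ℕ → ℂ := fun k => c k * ((k : ℂ) * z₀ ^ (k-1)) with hF
  have hDS : ∑ k ∈ Finset.range (2*n+2), F k
      = ∑ j ∈ Finset.range (n+1), (F (n - j) + F (n+1+j)) := by
    have hsplit : (2*n+2) = (n+1) + (n+1) := by omega
    rw [hsplit, Finset.sum_range_add]
    rw [Finset.sum_add_distrib]
    congr 1
    rw [← Finset.sum_range_reflect F (n+1)]
    simp only [Nat.add_sub_cancel]
  -- pairing identity
  have hpair : ∀ j ∈ Finset.range (n+1), F (n - j) + F (n+1+j)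
      = ((-1) ^ (n+1) * q ^ n * (q⁻¹) ^ (n * (n+1) / 2))
        * ((-1 : ℂ) ^ j * (2 * (j : ℂ) + 1) * q ^ (j * (j+1) / 2) * gb q (2*n+1) (n - j)) := by
    intro j hj
    simp only [Finset.mem_range] at hj
    rcases Nat.lt_or_ge j n with hjn | hjn
    · -- j < n
      obtain ⟨e, rfl⟩ : ∃ e, n = j + e + 1 := ⟨n - j - 1, by omega⟩
      set n' := j + e + 1 with hn'
      have hnj : n' - j = e + 1 := by omega
      rw [hnj]
      have hFa : F (e+1) = ((-1:ℂ)^(e+1) * ((e:ℂ)+1) * gb q (2*n'+1) (e+1))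
          * (q ^ ((e+1)*e/2) * (q⁻¹) ^ (n'*e)) := by
        simp only [hF, hc, hz₀, Nat.add_sub_cancel]
        rw [← pow_mul, Nat.mul_comm n' e]
        push_cast
        ring
      have hFb : F (n'+1+j) = ((-1:ℂ)^(n'+1+j) * ((n':ℂ)+1+(j:ℂ)) * gb q (2*n'+1) (n'+1+j))
          * (q ^ ((n'+1+j)*(n'+j)/2) * (q⁻¹) ^ (n'*(n'+j))) := by
        simp only [hF, hc, hz₀]
        rw [show n'+1+j-1 = n'+j from by omega, ← pow_mul]
        push_cast
        ring
      have hgb : gb q (2*n'+1) (n'+1+j) = gb q (2*n'+1) (e+1) := by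
        rw [gb_symm hqj (show n'+1+j ≤ 2*n'+1 by omega)]
        congr 1
        omega
      rw [hgb] at hFb
      -- rewrite all three q-power pairs to common u-exponent M := n'*(n'+j)
      have hM1 : q ^ ((e+1)*e/2) * (q⁻¹) ^ (n'*e)
          = q ^ ((e+1)*e/2 + (n'*(n'+j) - n'*e)) * (q⁻¹) ^ (n'*(n'+j)) := by
        apply qexp hq0
        have : n'*e ≤ n'*(n'+j) := Nat.mul_le_mul le_rfl (by omega)
        omega
      have hM3 : q ^ (n' + j*(j+1)/2) * (q⁻¹) ^ (n'*(n'+1)/2)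
          = q ^ ((n' + j*(j+1)/2) + (n'*(n'+j) - n'*(n'+1)/2)) * (q⁻¹) ^ (n'*(n'+j)) := by
        apply qexp hq0
        have h1 : 2*(n'*(n'+1)/2) = n'*(n'+1) := by
          have := htri n'; omega
        have h2 : n'*(n'+1) ≤ n'*(2*(n'+j)) := Nat.mul_le_mul le_rfl (by omega)
        have h3 : n'*(2*(n'+j)) = 2*(n'*(n'+j)) := by ring
        omega
      -- the three q-exponents agree
      have hexp12 : (e+1)*e/2 + (n'*(n'+j) - n'*e) = (n'+1+j)*(n'+j)/2 := by
        rw [show (n'+1+j)*(n'+j) = (n'+j)*((n'+j)+1) by ring]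
        have t1 := htri (n'+j)
        have t2 : (n'+j)*((n'+j)+1) = 4*(j*j) + 4*(j*e) + e*e + 6*j + 3*e + 2 := by
          rw [hn']; ring
        rw [show (e+1)*e = e*(e+1) by ring]
        have t3 := htri e
        have t4 : e*(e+1) = e*e + e := by ring
        have t5 : n'*(n'+j) = 2*(j*j) + 3*(j*e) + e*e + 3*j + 2*e + 1 := by rw [hn']; ring
        have t6 : n'*e = j*e + e*e + e := by rw [hn']; ring
        omega
      have hexp23 : (n' + j*(j+1)/2) + (n'*(n'+j) - n'*(n'+1)/2) = (n'+1+j)*(n'+j)/2 := by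
        rw [show (n'+1+j)*(n'+j) = (n'+j)*((n'+j)+1) by ring]
        have t1 := htri (n'+j)
        have t2 : (n'+j)*((n'+j)+1) = 4*(j*j) + 4*(j*e) + e*e + 6*j + 3*e + 2 := by
          rw [hn']; ring
        have t3 := htri j
        have t4 : j*(j+1) = j*j + j := by ring
        have t5 : n'*(n'+j) = 2*(j*j) + 3*(j*e) + e*e + 3*j + 2*e + 1 := by rw [hn']; ring
        have t6 := htri n'
        have t7 : n'*(n'+1) = j*j + 2*(j*e) + e*e + 3*j + 3*e + 2 := by rw [hn']; ring
        omega
      rw [hFa, hFb, hM1, hexp12]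
      -- RHS
      have hRHS : ((-1:ℂ) ^ (n'+1) * q ^ n' * (q⁻¹) ^ (n'*(n'+1)/2))
          * ((-1 : ℂ) ^ j * (2 * (j : ℂ) + 1) * q ^ (j*(j+1)/2) * gb q (2*n'+1) (e+1))
          = (((-1:ℂ)^(n'+1) * (-1)^j * (2*(j:ℂ)+1)) * gb q (2*n'+1) (e+1))
            * (q ^ (n' + j*(j+1)/2) * (q⁻¹) ^ (n'*(n'+1)/2)) := by
        rw [pow_add q n' (j*(j+1)/2)]
        ring
      rw [hRHS, hM3, hexp23]
      -- now cancel the common power factor; reduce to coefficient identity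
      rw [← add_mul]
      congr 1
      simp only [hn']
      push_cast
      simp only [pow_add, pow_one]
      linear_combination ((e:ℂ)+1) * (-1:ℂ)^e * gb q (2*(j+e+1)+1) (e+1) * neg_one_pow_sq j
    · -- j = n
      have hj' : j = n := by omega
      subst hj'
      have hF0 : F (j - j) = 0 := by
        rw [Nat.sub_self, hF]
        simp
      rw [hF0, zero_add, Nat.sub_self]
      have hF1 : F (j+1+j) = ((-1:ℂ)^(2*j+1) * (2*(j:ℂ)+1) * gb q (2*j+1) (2*j+1))
          * (q ^ ((2*j+1)*(2*j)/2) * (q⁻¹) ^ (j*(2*j))) := by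
        rw [show j+1+j = 2*j+1 from by omega]
        simp only [hF, hc, hz₀]
        rw [show 2*j+1-1 = 2*j from by omega, ← pow_mul]
        push_cast
        ring
      rw [hF1, gb_self, gb_zero_right]
      have hodd : (-1:ℂ)^(2*j+1) = -1 := by
        rw [pow_succ, pow_mul]
        norm_num
      have hM : q ^ ((2*j+1)*(2*j)/2) * (q⁻¹) ^ (j*(2*j))
          = q ^ (j + j*(j+1)/2) * (q⁻¹) ^ (j*(j+1)/2) := by
        apply qexp hq0
        have t1 := htri j
        have t2 : j*(j+1) = j*j + j := by ring
        rw [show (2*j+1)*(2*j) = (2*j)*((2*j)+1) by ring]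
        have t3 := htri (2*j)
        have t4 : (2*j)*((2*j)+1) = 4*(j*j) + 2*j := by ring
        have t5 : j*(2*j) = 2*(j*j) := by ring
        omega
      rw [hM, hodd, pow_add q j (j*(j+1)/2)]
      linear_combination ((2*(j:ℂ)+1) * q^j * q^(j*(j+1)/2) * (q⁻¹)^(j*(j+1)/2)) * neg_one_pow_sq j
  rw [Finset.sum_congr rfl hpair, ← Finset.mul_sum] at hDS
  rw [hDS] at hD
  rw [hDP] at hD
  have hne : ((-1:ℂ) ^ (n+1) * q ^ n * (q⁻¹) ^ (n * (n+1) / 2)) ≠ 0 := by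
    apply mul_ne_zero (mul_ne_zero (pow_ne_zero _ (by norm_num)) (pow_ne_zero _ hq0))
    exact pow_ne_zero _ (inv_ne_zero hq0)
  exact (mul_left_cancel₀ hne hD).symm

section Analytic

variable (hq : ‖q‖ < 1)

include hq in
lemma hqj' : ∀ j : ℕ, 1 - q ^ (j+1) ≠ 0 := by
  intro j
  have h1 : ‖q ^ (j+1)‖ < 1 := by
    rw [norm_pow]
    calc ‖q‖ ^ (j+1) ≤ ‖q‖ ^ 1 := pow_le_pow_of_le_one (norm_nonneg _) hq.le (by omega)
      _ < 1 := by simpa using hq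
  intro h
  rw [sub_eq_zero] at h
  rw [← h] at h1
  simp at h1

include hq in
lemma sumgeo : Summable (fun i : ℕ => ‖q‖ ^ (i+1)) :=
  ((summable_geometric_of_lt_one (norm_nonneg q) hq).mul_left ‖q‖).congr
    (fun i => by rw [pow_succ]; ring)

include hq in
lemma sumlog : Summable (fun i : ℕ => Complex.log (1 - q ^ (i+1))) := by
  apply Summable.of_norm_bounded_eventually_nat (g := fun i => 3/2 * ‖q‖ ^ (i+1))
    ((sumgeo hq).mul_left _)
  have h0 : Tendsto (fun i : ℕ => ‖q‖ ^ (i+1)) atTop (𝓝 0) :=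
    (tendsto_pow_atTop_nhds_zero_of_lt_one (norm_nonneg q) hq).comp (tendsto_add_atTop_nat 1)
  have hev : ∀ᶠ i in atTop, ‖q‖ ^ (i+1) ≤ 1/2 :=
    (h0.eventually (eventually_le_nhds (by norm_num))).mono (fun i h => h)
  filter_upwards [hev] with i hi
  have h2 : ‖-q ^ (i+1)‖ ≤ 1/2 := by rw [norm_neg, norm_pow]; exact hi
  have := Complex.norm_log_one_add_half_le_self h2
  rw [show (1 : ℂ) + -q^(i+1) = 1 - q^(i+1) by ring] at this
  refine this.trans ?_
  rw [norm_neg, norm_pow]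

include hq in
lemma hasProdP : HasProd (fun i : ℕ => 1 - q ^ (i+1))
    (Complex.exp (∑' i : ℕ, Complex.log (1 - q ^ (i+1)))) := by
  have := (sumlog hq).hasSum.cexp
  apply this.congr
  intro b
  congr 1
  exact funext fun i => Complex.exp_log (hqj' hq i)

include hq in
lemma tendsto_qp : Tendsto (fun n => qp q n) atTop
    (𝓝 (Complex.exp (∑' i : ℕ, Complex.log (1 - q ^ (i+1))))) :=
  (hasProdP hq).tendsto_prod_nat

-- real bounds
include hq in
lemma qp_norm_le (n : ℕ) : ‖qp q n‖ ≤ ∏ i ∈ Finset.range n, (1 + ‖q‖ ^ (i+1)) := by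
  rw [qp, norm_prod]
  apply Finset.prod_le_prod (fun i _ => norm_nonneg _)
  intro i _
  calc ‖1 - q ^ (i+1)‖ ≤ ‖(1:ℂ)‖ + ‖q ^ (i+1)‖ := norm_sub_le _ _
    _ = 1 + ‖q‖ ^ (i+1) := by rw [norm_one, norm_pow]

include hq in
lemma qp_norm_ge (n : ℕ) : (∏ i ∈ Finset.range n, (1 - ‖q‖ ^ (i+1))) ≤ ‖qp q n‖ := by
  rw [qp, norm_prod]
  apply Finset.prod_le_prod
  · intro i _
    have : ‖q‖ ^ (i+1) ≤ ‖q‖ ^ 1 := pow_le_pow_of_le_one (norm_nonneg _) hq.le (by omega)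
    simp only [pow_one] at this
    nlinarith
  · intro i _
    calc 1 - ‖q‖ ^ (i+1) = ‖(1:ℂ)‖ - ‖q ^ (i+1)‖ := by rw [norm_one, norm_pow]
      _ ≤ ‖1 - q ^ (i+1)‖ := norm_sub_norm_le _ _

-- convergence of the real products
include hq in
lemma real_upper : ∃ C : ℝ, 0 < C ∧ ∀ n, ∏ i ∈ Finset.range n, (1 + ‖q‖ ^ (i+1)) ≤ C := by
  have hpos : ∀ (x : Unit) (i : ℕ), (0:ℝ) < 1 + ‖q‖ ^ (i+1) := fun _ i => by positivity
  have hsumlog : ∀ x : Unit, Summable (fun i : ℕ => Real.log (1 + ‖q‖ ^ (i+1))) := by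
    intro _
    apply Summable.of_nonneg_of_le (fun i => Real.log_nonneg (by nlinarith [pow_nonneg (norm_nonneg q) (i+1)]))
      (fun i => ?_) (sumgeo hq)
    have := Real.add_one_le_exp (‖q‖ ^ (i+1))
    calc Real.log (1 + ‖q‖ ^ (i+1)) ≤ Real.log (Real.exp (‖q‖ ^ (i+1))) := by
          apply Real.log_le_log (by positivity)
          linarith
      _ = ‖q‖ ^ (i+1) := Real.log_exp _
  have hP := (Real.hasProd_of_hasSum_log (hpos ()) (hsumlog ()).hasSum).multipliable.hasProd
  refine ⟨∏' i : ℕ, (1 + ‖q‖ ^ (i+1)), ?_, ?_⟩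
  · have : (∏' i : ℕ, (1 + ‖q‖ ^ (i+1))) = Real.exp (∑' i, Real.log (1 + ‖q‖ ^ (i+1))) := by
      exact (Real.rexp_tsum_eq_tprod (hpos ()) (hsumlog ())).symm
    rw [this]
    exact Real.exp_pos _
  · intro n
    apply ge_of_tendsto hP.tendsto_prod_nat
    filter_upwards [eventually_ge_atTop n] with m hm
    have hsub : Finset.range n ⊆ Finset.range m := Finset.range_subset_range.mpr hm
    have hone : (1:ℝ) ≤ ∏ i ∈ Finset.range m \ Finset.range n, (1 + ‖q‖ ^ (i+1)) := by
      calc (1:ℝ) = ∏ i ∈ Finset.range m \ Finset.range n, 1 := by simp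
        _ ≤ _ := Finset.prod_le_prod (fun i _ => zero_le_one)
            (fun i _ => by nlinarith [pow_nonneg (norm_nonneg q) (i+1)])
    calc ∏ i ∈ Finset.range n, (1 + ‖q‖ ^ (i+1))
        = (∏ i ∈ Finset.range n, (1 + ‖q‖ ^ (i+1))) * 1 := (mul_one _).symm
      _ ≤ (∏ i ∈ Finset.range n, (1 + ‖q‖ ^ (i+1)))
          * ∏ i ∈ Finset.range m \ Finset.range n, (1 + ‖q‖ ^ (i+1)) := by
          apply mul_le_mul_of_nonneg_left hone
          exact Finset.prod_nonneg (fun i _ => by positivity)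
      _ = ∏ i ∈ Finset.range m, (1 + ‖q‖ ^ (i+1)) := by
          rw [← Finset.prod_union (Finset.disjoint_sdiff)]
          congr 1
          rw [Finset.union_sdiff_of_subset hsub]

include hq in
lemma real_lower : ∃ D : ℝ, 0 < D ∧ ∀ n, D ≤ ∏ i ∈ Finset.range n, (1 - ‖q‖ ^ (i+1)) := by
  have hfact : ∀ i : ℕ, (0:ℝ) < 1 - ‖q‖ ^ (i+1) := by
    intro i
    have : ‖q‖ ^ (i+1) ≤ ‖q‖ ^ 1 := pow_le_pow_of_le_one (norm_nonneg _) hq.le (by omega)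
    simp only [pow_one] at this
    nlinarith
  have hpos : ∀ (x : Unit) (i : ℕ), (0:ℝ) < 1 - ‖q‖ ^ (i+1) := fun _ i => hfact i
  have hsumlog : ∀ x : Unit, Summable (fun i : ℕ => Real.log (1 - ‖q‖ ^ (i+1))) := by
    intro _
    rw [← summable_neg_iff]
    apply Summable.of_nonneg_of_le
      (fun i => by
        simp only [neg_nonneg]
        exact Real.log_nonpos (hfact i).le (by nlinarith [pow_nonneg (norm_nonneg q) (i+1)]))
      (fun i => ?_) ((sumgeo hq).mul_left (1/(1-‖q‖)))
    -- -log(1-x) = log (1/(1-x)) ≤ 1/(1-x) - 1 = x/(1-x) ≤ x / (1-‖q‖)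
    have hx := hfact i
    have h1 : -Real.log (1 - ‖q‖ ^ (i+1)) = Real.log (1/(1 - ‖q‖ ^ (i+1))) := by
      rw [Real.log_div one_ne_zero (ne_of_gt hx), Real.log_one]
      ring
    rw [h1]
    have h2 := Real.log_le_sub_one_of_pos (show (0:ℝ) < 1/(1 - ‖q‖ ^ (i+1)) by positivity)
    refine h2.trans ?_
    rw [div_sub_one (ne_of_gt hx)]
    have hq1 : (0:ℝ) < 1 - ‖q‖ := by linarith
    have hle : 1 - ‖q‖ ≤ 1 - ‖q‖ ^ (i+1) := by
      have : ‖q‖ ^ (i+1) ≤ ‖q‖ ^ 1 := pow_le_pow_of_le_one (norm_nonneg _) hq.le (by omega)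
      simp only [pow_one] at this
      linarith
    calc (1 - (1 - ‖q‖ ^ (i+1)))/(1 - ‖q‖ ^ (i+1)) = ‖q‖ ^ (i+1) / (1 - ‖q‖ ^ (i+1)) := by
          congr 1; ring
      _ ≤ ‖q‖ ^ (i+1) / (1 - ‖q‖) := by
          apply div_le_div_of_nonneg_left (by positivity) hq1 hle
      _ = 1/(1-‖q‖) * ‖q‖ ^ (i+1) := by ring
  have hP := (Real.hasProd_of_hasSum_log (hpos ()) (hsumlog ()).hasSum).multipliable.hasProd
  have hval : (∏' i : ℕ, (1 - ‖q‖ ^ (i+1))) = Real.exp (∑' i, Real.log (1 - ‖q‖ ^ (i+1))) := by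
    exact (Real.rexp_tsum_eq_tprod (hpos ()) (hsumlog ())).symm
  refine ⟨∏' i : ℕ, (1 - ‖q‖ ^ (i+1)), by rw [hval]; exact Real.exp_pos _, ?_⟩
  intro n
  apply le_of_tendsto hP.tendsto_prod_nat
  filter_upwards [eventually_ge_atTop n] with m hm
  -- product over range m ≤ product over range n since extra factors ≤ 1
  have hsub : Finset.range n ⊆ Finset.range m := Finset.range_subset_range.mpr hm
  calc ∏ i ∈ Finset.range m, (1 - ‖q‖ ^ (i+1))
      = (∏ i ∈ Finset.range n, (1 - ‖q‖ ^ (i+1)))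
        * ∏ i ∈ Finset.range m \ Finset.range n, (1 - ‖q‖ ^ (i+1)) := by
        rw [← Finset.prod_union (Finset.disjoint_sdiff)]
        congr 1
        rw [Finset.union_sdiff_of_subset hsub]
    _ ≤ (∏ i ∈ Finset.range n, (1 - ‖q‖ ^ (i+1))) * 1 := by
        apply mul_le_mul_of_nonneg_left _ (Finset.prod_nonneg (fun i _ => (hfact i).le))
        apply Finset.prod_le_one (fun i _ => (hfact i).le)
        intro i _
        nlinarith [pow_nonneg (norm_nonneg q) (i+1)]
    _ = _ := mul_one _

end Analytic
section Main

variable (hq : ‖q‖ < 1)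

-- the coefficient sequence
def aa (q : ℂ) : ℕ → ℂ := fun k => ((-1 : ℂ) ^ k * (2 * (k : ℂ) + 1)) * q ^ (k * (k + 1) / 2)

include hq in
lemma summable_bound : Summable (fun j : ℕ => (2 * (j:ℝ) + 1) * ‖q‖ ^ j) := by
  have hq' : ‖(‖q‖ : ℝ)‖ < 1 := by rwa [Real.norm_eq_abs, abs_of_nonneg (norm_nonneg q)]
  have h1 := summable_pow_mul_geometric_of_norm_lt_one 1 hq'
  have h2 := summable_geometric_of_lt_one (norm_nonneg q) hq
  apply Summable.congr ((h1.mul_left 2).add h2)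
  intro j
  push_cast
  ring

include hq in
lemma norm_aa_le (j : ℕ) : ‖aa q j‖ ≤ (2 * (j:ℝ) + 1) * ‖q‖ ^ j := by
  rw [aa]
  have hcast : ((-1 : ℂ) ^ j * (2 * (j : ℂ) + 1)) = (-1)^j * ((2*j+1 : ℕ) : ℂ) := by
    push_cast; ring
  rw [hcast, norm_mul, norm_mul, norm_pow, norm_neg, norm_one, one_pow, one_mul,
    Complex.norm_natCast, norm_pow]
  have hexp : j ≤ j * (j+1) / 2 := by
    have h1 := htri j
    have h2 : j*(j+1) = j*j + j := by ring
    have h3 : j ≤ j * j := by nlinarith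
    omega
  have hpow : ‖q‖ ^ (j * (j+1) / 2) ≤ ‖q‖ ^ j :=
    pow_le_pow_of_le_one (norm_nonneg q) hq.le hexp
  calc (↑(2*j+1) : ℝ) * ‖q‖ ^ (j*(j+1)/2) ≤ (↑(2*j+1) : ℝ) * ‖q‖ ^ j := by
        apply mul_le_mul_of_nonneg_left hpow (by positivity)
    _ = (2 * (j:ℝ) + 1) * ‖q‖ ^ j := by push_cast; ring

include hq in
lemma summable_aa : Summable (aa q) :=
  Summable.of_norm_bounded (summable_bound hq) (norm_aa_le hq)

-- the key closed form for the truncated coefficients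
include hq in
lemma key_form {n j : ℕ} (hjn : j ≤ n) :
    qp q n * gb q (2*n+1) (n - j)
      = qp q n * qp q (2*n+1) * (qp q (n-j))⁻¹ * (qp q (n+1+j))⁻¹ := by
  have hqj := hqj' hq
  have h1 := gb_closed hqj (2*n+1) (n-j) (by omega)
  rw [show 2*n+1 - (n-j) = n+1+j from by omega] at h1
  have h2 := qp_ne_zero hqj (n-j)
  have h3 := qp_ne_zero hqj (n+1+j)
  field_simp
  calc qp q n * gb q (2*n+1) (n-j) * qp q (n-j) * qp q (n+1+j)
      = qp q n * (gb q (2*n+1) (n-j) * (qp q (n-j) * qp q (n+1+j))) := by ring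
    _ = qp q n * qp q (2*n+1) := by rw [h1]

include hq in
theorem main (hq0 : q ≠ 0) :
    (∏' n : ℕ, (1 - q ^ (n + 1)) ^ 3) = ∑' k : ℕ, aa q k := by
  have hqj := hqj' hq
  set P : ℂ := Complex.exp (∑' i : ℕ, Complex.log (1 - q ^ (i+1))) with hP
  have hPne : P ≠ 0 := Complex.exp_ne_zero _
  have htend : Tendsto (fun n => qp q n) atTop (𝓝 P) := tendsto_qp hq
  -- the doubly-indexed family
  set f : ℕ → ℕ → ℂ := fun n j =>
    if j ≤ n then aa q j * (qp q n * gb q (2*n+1) (n - j)) else 0 with hf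
  -- tsum of each row
  have hrow : ∀ n, ∑' j, f n j = qp q n ^ 3 := by
    intro n
    have hz : ∀ j ∉ Finset.range (n+1), f n j = 0 := by
      intro j hj
      rw [Finset.mem_range] at hj
      rw [hf]
      simp only
      rw [if_neg (by omega)]
    rw [tsum_eq_sum hz]
    have : ∀ j ∈ Finset.range (n+1), f n j
        = qp q n * ((-1 : ℂ) ^ j * (2 * (j : ℂ) + 1) * q ^ (j * (j+1) / 2) * gb q (2*n+1) (n - j)) := by
      intro j hj
      rw [Finset.mem_range] at hj
      rw [hf]
      simp only
      rw [if_pos (by omega), aa]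
      ring
    rw [Finset.sum_congr rfl this, ← Finset.mul_sum, star hq0 hqj n]
    ring
  -- pointwise limits
  have hlim : ∀ j, Tendsto (fun n => f n j) atTop (𝓝 (aa q j)) := by
    intro j
    set g : ℕ → ℂ := fun n =>
      aa q j * (qp q n * qp q (2*n+1) * (qp q (n-j))⁻¹ * (qp q (n+1+j))⁻¹) with hg
    have hcongr : g =ᶠ[atTop] (fun n => f n j) := by
      filter_upwards [eventually_ge_atTop j] with n hn
      rw [hg, hf]
      simp only
      rw [if_pos hn, key_form hq hn]
    have ht1 : Tendsto (fun n : ℕ => 2*n+1) atTop atTop :=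
      tendsto_atTop_mono (fun n => by simp only [id_eq]; omega) tendsto_id
    have ht2 : Tendsto (fun n : ℕ => n - j) atTop atTop := tendsto_sub_atTop_nat j
    have ht3 : Tendsto (fun n : ℕ => n+1+j) atTop atTop :=
      tendsto_atTop_mono (fun n => by simp only [id_eq]; omega) tendsto_id
    have hgt : Tendsto g atTop (𝓝 (aa q j * (P * P * P⁻¹ * P⁻¹))) := by
      apply Tendsto.const_mul
      exact ((htend.mul (htend.comp ht1)).mul ((htend.comp ht2).inv₀ hPne)).mul
        ((htend.comp ht3).inv₀ hPne)
    have hval : aa q j * (P * P * P⁻¹ * P⁻¹) = aa q j := by field_simp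
    rw [hval] at hgt
    exact hgt.congr' hcongr
  -- uniform bound
  obtain ⟨C, hCpos, hC⟩ := real_upper hq
  obtain ⟨D, hDpos, hD⟩ := real_lower hq
  have hCq : ∀ m, ‖qp q m‖ ≤ C := fun m => (qp_norm_le hq m).trans (hC m)
  have hDq : ∀ m, D ≤ ‖qp q m‖ := fun m => (hD m).trans (qp_norm_ge hq m)
  have hbound : ∀ n j, ‖f n j‖ ≤ ((2 * (j:ℝ) + 1) * ‖q‖ ^ j) * (C * C * (D⁻¹ * D⁻¹)) := by
    intro n j
    rcases le_or_gt j n with hjn | hjn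
    · rw [hf]
      simp only
      rw [if_pos hjn, key_form hq hjn, norm_mul]
      apply mul_le_mul (norm_aa_le hq j)
      · rw [norm_mul, norm_mul, norm_mul, norm_inv, norm_inv]
        have hposD : (0:ℝ) < D := hDpos
        have i1 : ‖qp q (n-j)‖⁻¹ ≤ D⁻¹ := by
          apply inv_anti₀ hposD (hDq _)
        have i2 : ‖qp q (n+1+j)‖⁻¹ ≤ D⁻¹ := by
          apply inv_anti₀ hposD (hDq _)
        have c1 : ‖qp q n‖ * ‖qp q (2*n+1)‖ ≤ C * C :=
          mul_le_mul (hCq n) (hCq _) (norm_nonneg _) hCpos.le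
        have h4 : ‖qp q (n-j)‖⁻¹ * ‖qp q (n+1+j)‖⁻¹ ≤ D⁻¹ * D⁻¹ :=
          mul_le_mul i1 i2 (by positivity) (by positivity)
        calc ‖qp q n‖ * ‖qp q (2*n+1)‖ * ‖qp q (n-j)‖⁻¹ * ‖qp q (n+1+j)‖⁻¹
            = (‖qp q n‖ * ‖qp q (2*n+1)‖) * (‖qp q (n-j)‖⁻¹ * ‖qp q (n+1+j)‖⁻¹) := by ring
          _ ≤ (C * C) * (D⁻¹ * D⁻¹) :=
              mul_le_mul c1 h4 (by positivity) (by positivity)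
      · exact norm_nonneg _
      · positivity
    · rw [hf]
      simp only
      rw [if_neg (by omega), norm_zero]
      positivity
  -- Tannery
  have htan := tendsto_tsum_of_dominated_convergence
    (f := f) (g := aa q)
    (bound := fun j => ((2 * (j:ℝ) + 1) * ‖q‖ ^ j) * (C * C * (D⁻¹ * D⁻¹)))
    ((summable_bound hq).mul_right _) hlim (Eventually.of_forall hbound)
  have hcube : Tendsto (fun n => qp q n ^ 3) atTop (𝓝 (∑' k, aa q k)) := by
    apply htan.congr
    intro n
    exact hrow n
  have hcube2 : Tendsto (fun n => qp q n ^ 3) atTop (𝓝 (P ^ 3)) := htend.pow 3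
  have hPS : P ^ 3 = ∑' k, aa q k := tendsto_nhds_unique hcube2 hcube
  -- identify the tprod
  have hprod3 : HasProd (fun i : ℕ => (1 - q ^ (i+1)) ^ 3) (P ^ 3) := by
    have h0 := hasProdP hq
    have := (h0.mul h0).mul h0
    have hfun : (fun i : ℕ => (1 - q ^ (i+1)) * (1 - q ^ (i+1)) * (1 - q ^ (i+1)))
        = fun i : ℕ => (1 - q ^ (i+1)) ^ 3 := funext fun i => by ring
    have hval : P * P * P = P ^ 3 := by ring
    rwa [hfun, hval] at this
  rw [hprod3.tprod_eq, hPS]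

end Main

end Jacobi

theorem stmt11 (q : ℂ) (hq : ‖q‖ < 1) :
    Summable (fun k : ℕ => ((-1 : ℂ) ^ k * (2 * (k : ℂ) + 1)) * q ^ (k * (k + 1) / 2)) ∧
    (∏' n : ℕ, (1 - q ^ (n + 1)) ^ 3)
      = ∑' k : ℕ, ((-1 : ℂ) ^ k * (2 * (k : ℂ) + 1)) * q ^ (k * (k + 1) / 2) := by
  rcases eq_or_ne q 0 with rfl | hq0
  · constructor
    · apply summable_of_ne_finset_zero (s := {0})
      intro k hk
      simp only [Finset.mem_singleton] at hk
      have hexp : k * (k+1) / 2 ≠ 0 := by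
        have h1 := htri k
        have h2 : k*(k+1) = k*k + k := by ring
        have h3 : 1 ≤ k * k := Nat.one_le_iff_ne_zero.mpr (by
          intro h; rcases Nat.mul_eq_zero.mp h with h' | h' <;> exact hk h')
        omega
      rw [zero_pow hexp, mul_zero]
    · have hfun : (fun n : ℕ => (1 - (0:ℂ) ^ (n+1)) ^ 3) = fun _ => (1:ℂ) := by
        funext n
        rw [zero_pow (Nat.succ_ne_zero n)]
        ring
      rw [hfun, tprod_one]
      rw [tsum_eq_single 0 ?_]
      · norm_num
      · intro k hk
        have hexp : k * (k+1) / 2 ≠ 0 := by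
          have h1 := htri k
          have h2 : k*(k+1) = k*k + k := by ring
          have h3 : 1 ≤ k * k := Nat.one_le_iff_ne_zero.mpr (by
            intro h; rcases Nat.mul_eq_zero.mp h with h' | h' <;> exact hk h')
          omega
        rw [zero_pow hexp, mul_zero]
  · exact ⟨summable_aa hq, main hq hq0⟩
end

section
/- For every complex q with |q| < 1: Σ_{n=0}^∞ q^{n²}·(−q; q²)_n/(−q⁴; q⁴)_n = Σ_{n=0}^∞ q^{2n²}·(−q²; q⁴)_n/(−q⁴; q⁴)_n + q·Σ_{n=0}^∞ q^{2n(n+2)}·(−q²; q⁴)_n/(−q⁴; q⁴)_n. That is, U₀(q) = S₀(q²) + q·S₁(q²). -/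
open Finset Filter

/-- The finite q-Pochhammer symbol `(a; q)_n = ∏_{k=0}^{n-1} (1 - a q^k)`. -/
def qPoch (a q : ℂ) (n : ℕ) : ℂ := ∏ k ∈ Finset.range n, (1 - a * q ^ k)

noncomputable section MTsec
namespace MT

def mtP (q : ℂ) (n : ℕ) : ℂ := ∏ k ∈ range n, (1 + q ^ (2*k+1))
def mtD (q : ℂ) (j n : ℕ) : ℂ := ∏ k ∈ range n, (1 + q ^ (4*j+4+4*k))
def mtQ (q : ℂ) (j m : ℕ) : ℂ := ∏ k ∈ range m, (1 + q ^ (4*j+2+4*k))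
def mtL (q : ℂ) (j n : ℕ) : ℂ := q ^ (n^2+4*j*n) * mtP q n / mtD q j n
def mtR (q : ℂ) (j m : ℕ) : ℂ := q ^ (2*m^2+4*j*m) * mtQ q j m * (1 + q ^ (4*j+4*m+1)) / mtD q j m
def mtH (q : ℂ) (j n : ℕ) : ℂ := (1 + q ^ (4*j+4)) * (1 + q ^ (4*j+2*n+1)) * mtL q j n
def mtM (q : ℂ) (n : ℕ) : ℝ := ‖q‖^(n^2) * (2/(1-‖q‖^4))^n

variable {q : ℂ}

/-! ### Algebraic lemmas -/

lemma one_add_pow_ne (hq : ‖q‖ < 1) {k : ℕ} (hk : 1 ≤ k) : (1 : ℂ) + q ^ k ≠ 0 := by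
  intro h
  have h1 : q ^ k = -1 := by linear_combination h
  have h2 : ‖q ^ k‖ < 1 := by
    rw [norm_pow]
    calc ‖q‖ ^ k ≤ ‖q‖ ^ 1 := pow_le_pow_of_le_one (norm_nonneg q) hq.le hk
    _ < 1 := by simpa using hq
  rw [h1] at h2; simp at h2

lemma mtP_succ (n : ℕ) : mtP q (n+1) = mtP q n * (1 + q ^ (2*n+1)) := prod_range_succ _ _

lemma mtD_succ (j n : ℕ) : mtD q j (n+1) = mtD q j n * (1 + q ^ (4*j+4+4*n)) := prod_range_succ _ _

lemma mtD_shift (j n : ℕ) : mtD q j (n+1) = mtD q (j+1) n * (1 + q ^ (4*j+4)) := by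
  rw [mtD, mtD, prod_range_succ']
  have h : ∀ k, 4*j+4+4*(k+1) = 4*(j+1)+4+4*k := by omega
  simp only [h]

lemma mtQ_shift (j m : ℕ) : mtQ q j (m+1) = mtQ q (j+1) m * (1 + q ^ (4*j+2)) := by
  rw [mtQ, mtQ, prod_range_succ']
  have h : ∀ k, 4*j+2+4*(k+1) = 4*(j+1)+2+4*k := by omega
  simp only [h]

lemma mtD_ne (hq : ‖q‖ < 1) (j n : ℕ) : mtD q j n ≠ 0 := by
  rw [mtD]
  exact Finset.prod_ne_zero_iff.2 fun k _ => one_add_pow_ne hq (by omega)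

lemma mtD_eq (hq : ‖q‖ < 1) (j n : ℕ) :
    mtD q (j+1) n = mtD q j n * (1 + q ^ (4*j+4+4*n)) / (1 + q ^ (4*j+4)) := by
  rw [eq_div_iff (one_add_pow_ne hq (by omega)), ← mtD_shift, mtD_succ]

/-- The telescoping certificate for the L side. -/
lemma certL (hq : ‖q‖ < 1) (j n : ℕ) :
    (1 + q ^ (4*j+4)) * mtL q j n
      = q ^ (4*j+2) * (1 + q ^ (4*j+2)) * mtL q (j+1) n + (mtH q j n - mtH q j (n+1)) := by
  have hDn := mtD_ne hq j n
  have hA : (1 : ℂ) + q ^ (4*j+4) ≠ 0 := one_add_pow_ne hq (by omega)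
  have hE : (1 : ℂ) + q ^ (4*j+4+4*n) ≠ 0 := one_add_pow_ne hq (by omega)
  rw [mtH, mtH, mtL, mtL, mtL, mtP_succ, mtD_succ, mtD_eq hq]
  field_simp
  ring

/-- The telescoping certificate for the R side. -/
lemma certR (hq : ‖q‖ < 1) (j m : ℕ) :
    q ^ (4*j+2) * (1 + q ^ (4*j+2)) * mtR q (j+1) m
      = (1 + q ^ (4*j+4)) * mtR q j (m+1) := by
  have hDm := mtD_ne hq j m
  have hA : (1 : ℂ) + q ^ (4*j+4) ≠ 0 := one_add_pow_ne hq (by omega)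
  have hE : (1 : ℂ) + q ^ (4*j+4+4*m) ≠ 0 := one_add_pow_ne hq (by omega)
  rw [mtR, mtR, mtQ_shift, mtD_succ, mtD_eq hq]
  field_simp
  ring

/-! ### Norm bounds -/

lemma r4_lt (hq : ‖q‖ < 1) : ‖q‖^4 < 1 := pow_lt_one₀ (norm_nonneg q) hq (by norm_num)

lemma den_pos (hq : ‖q‖ < 1) : (0:ℝ) < 1 - ‖q‖^4 := by linarith [r4_lt hq]

lemma norm_one_add_le (k : ℕ) (hq : ‖q‖ < 1) : ‖(1:ℂ) + q^k‖ ≤ 2 := by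
  calc ‖(1:ℂ) + q^k‖ ≤ ‖(1:ℂ)‖ + ‖q^k‖ := norm_add_le _ _
  _ ≤ 1 + 1 := by
      simp only [norm_one, norm_pow]
      gcongr
      exact pow_le_one₀ (norm_nonneg q) hq.le
  _ = 2 := by norm_num

lemma norm_one_add_ge (hq : ‖q‖ < 1) {k : ℕ} (hk : 4 ≤ k) :
    1 - ‖q‖^4 ≤ ‖(1:ℂ) + q^k‖ := by
  have h := norm_sub_norm_le (1:ℂ) (-(q^k))
  simp only [norm_one, norm_neg, sub_neg_eq_add, norm_pow] at h
  have h2 : ‖q‖^k ≤ ‖q‖^4 := pow_le_pow_of_le_one (norm_nonneg q) hq.le hk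
  linarith

lemma norm_mtP_le (n : ℕ) (hq : ‖q‖ < 1) : ‖mtP q n‖ ≤ 2^n := by
  rw [mtP, norm_prod]
  calc ∏ k ∈ range n, ‖(1:ℂ) + q^(2*k+1)‖ ≤ ∏ k ∈ range n, 2 :=
        Finset.prod_le_prod (fun k _ => norm_nonneg _) (fun k _ => norm_one_add_le _ hq)
  _ = 2^n := by simp

lemma norm_mtQ_le (j m : ℕ) (hq : ‖q‖ < 1) : ‖mtQ q j m‖ ≤ 2^m := by
  rw [mtQ, norm_prod]
  calc ∏ k ∈ range m, ‖(1:ℂ) + q^(4*j+2+4*k)‖ ≤ ∏ k ∈ range m, 2 :=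
        Finset.prod_le_prod (fun k _ => norm_nonneg _) (fun k _ => norm_one_add_le _ hq)
  _ = 2^m := by simp

lemma norm_mtD_ge (j n : ℕ) (hq : ‖q‖ < 1) : (1 - ‖q‖^4)^n ≤ ‖mtD q j n‖ := by
  rw [mtD, norm_prod]
  calc (1 - ‖q‖^4)^n = ∏ k ∈ range n, (1 - ‖q‖^4) := by simp
  _ ≤ ∏ k ∈ range n, ‖(1:ℂ) + q^(4*j+4+4*k)‖ :=
    Finset.prod_le_prod (fun k _ => (den_pos hq).le) (fun k _ => norm_one_add_ge hq (by omega))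

lemma mtM_nonneg (n : ℕ) (hq : ‖q‖ < 1) : 0 ≤ mtM q n := by
  apply mul_nonneg (pow_nonneg (norm_nonneg q) _)
  exact pow_nonneg (div_nonneg (by norm_num) (den_pos hq).le) _

/-- main norm bound for R-type terms -/
lemma norm_frac_le (hq : ‖q‖ < 1) (j m e : ℕ) (he : m^2 ≤ e) (Z : ℂ) (hZ : ‖Z‖ ≤ 2) :
    ‖q^e * mtQ q j m * Z / mtD q j m‖ ≤ 2 * mtM q m := by
  rw [norm_div, norm_mul, norm_mul, norm_pow]
  have h1 : ‖q‖^e * ‖mtQ q j m‖ * ‖Z‖ ≤ ‖q‖^(m^2) * 2^m * 2 := by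
    apply mul_le_mul _ hZ (norm_nonneg _) (by positivity)
    apply mul_le_mul _ (norm_mtQ_le j m hq) (norm_nonneg _) (by positivity)
    exact pow_le_pow_of_le_one (norm_nonneg q) hq.le he
  have h2 : (0:ℝ) < (1 - ‖q‖^4)^m := pow_pos (den_pos hq) m
  calc ‖q‖^e * ‖mtQ q j m‖ * ‖Z‖ / ‖mtD q j m‖
      ≤ ‖q‖^(m^2) * 2^m * 2 / (1 - ‖q‖^4)^m :=
        div_le_div₀ (by positivity) h1 h2 (norm_mtD_ge j m hq)
  _ = 2 * mtM q m := by
        rw [mtM, div_pow]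
        field_simp

lemma norm_mtL_le (hq : ‖q‖ < 1) (j n : ℕ) : ‖mtL q j n‖ ≤ mtM q n := by
  rw [mtL, norm_div, norm_mul, norm_pow]
  have h1 : ‖q‖^(n^2+4*j*n) * ‖mtP q n‖ ≤ ‖q‖^(n^2) * 2^n := by
    apply mul_le_mul _ (norm_mtP_le n hq) (norm_nonneg _) (by positivity)
    exact pow_le_pow_of_le_one (norm_nonneg q) hq.le (by omega)
  have h2 : (0:ℝ) < (1 - ‖q‖^4)^n := pow_pos (den_pos hq) n
  calc ‖q‖^(n^2+4*j*n) * ‖mtP q n‖ / ‖mtD q j n‖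
      ≤ ‖q‖^(n^2) * 2^n / (1 - ‖q‖^4)^n :=
        div_le_div₀ (by positivity) h1 h2 (norm_mtD_ge j n hq)
  _ = mtM q n := by
        rw [mtM, div_pow]
        field_simp

lemma norm_mtH_le (hq : ‖q‖ < 1) (j n : ℕ) : ‖mtH q j n‖ ≤ 4 * mtM q n := by
  rw [mtH, norm_mul, norm_mul]
  have h1 := norm_one_add_le (4*j+4) hq
  have h2 := norm_one_add_le (4*j+2*n+1) hq
  have h3 := norm_mtL_le hq j n
  have h4 := mtM_nonneg n hq
  have h5 : ‖(1:ℂ)+q^(4*j+4)‖ * ‖(1:ℂ)+q^(4*j+2*n+1)‖ * ‖mtL q j n‖ ≤ 2*2*mtM q n := by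
    apply mul_le_mul _ h3 (norm_nonneg _) (by positivity)
    exact mul_le_mul h1 h2 (norm_nonneg _) (by norm_num)
  linarith

/-! ### Summability -/

lemma summable_mtM (hq : ‖q‖ < 1) : Summable (mtM q) := by
  apply summable_of_ratio_norm_eventually_le (r := 1/2) (by norm_num)
  have h0 : Tendsto (fun n : ℕ => ‖q‖^n * (2/(1-‖q‖^4)) * 2) atTop (nhds 0) := by
    have := (tendsto_pow_atTop_nhds_zero_of_lt_one (norm_nonneg q) hq).mul_const
      ((2/(1-‖q‖^4)) * 2)
    simpa [mul_assoc] using this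
  have key : ∀ n : ℕ, mtM q (n+1) = mtM q n * (‖q‖^(2*n+1) * (2/(1-‖q‖^4))) := by
    intro n
    rw [mtM, mtM, show (n+1)^2 = n^2+(2*n+1) by ring, pow_add, pow_succ]
    ring
  have hc : (0:ℝ) ≤ 2/(1-‖q‖^4) := div_nonneg (by norm_num) (den_pos hq).le
  filter_upwards [h0.eventually_le_const (by norm_num : (0:ℝ) < 1)] with n hn
  rw [Real.norm_of_nonneg (mtM_nonneg _ hq), Real.norm_of_nonneg (mtM_nonneg _ hq), key]
  have h1 : ‖q‖^(2*n+1) ≤ ‖q‖^n := pow_le_pow_of_le_one (norm_nonneg q) hq.le (by omega)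
  have h2 : ‖q‖^(2*n+1) * (2/(1-‖q‖^4)) ≤ 1/2 := by
    have h3 : ‖q‖^(2*n+1) * (2/(1-‖q‖^4)) ≤ ‖q‖^n * (2/(1-‖q‖^4)) :=
      mul_le_mul_of_nonneg_right h1 hc
    nlinarith [mtM_nonneg n hq]
  calc mtM q n * (‖q‖^(2*n+1) * (2/(1-‖q‖^4))) ≤ mtM q n * (1/2) :=
        mul_le_mul_of_nonneg_left h2 (mtM_nonneg n hq)
  _ = 1/2 * mtM q n := by ring

lemma summable_mtL (hq : ‖q‖ < 1) (j : ℕ) : Summable (mtL q j) :=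
  Summable.of_norm (Summable.of_nonneg_of_le (fun _ => norm_nonneg _)
    (fun n => norm_mtL_le hq j n) (summable_mtM hq))

lemma summable_mtH (hq : ‖q‖ < 1) (j : ℕ) : Summable (mtH q j) :=
  Summable.of_norm (Summable.of_nonneg_of_le (fun _ => norm_nonneg _)
    (fun n => norm_mtH_le hq j n) ((summable_mtM hq).mul_left 4))

lemma summable_QD (hq : ‖q‖ < 1) (j : ℕ) (e : ℕ → ℕ) (he : ∀ m, m^2 ≤ e m)
    (Z : ℕ → ℂ) (hZ : ∀ m, ‖Z m‖ ≤ 2) :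
    Summable (fun m => q^(e m) * mtQ q j m * Z m / mtD q j m) :=
  Summable.of_norm (Summable.of_nonneg_of_le (fun _ => norm_nonneg _)
    (fun m => norm_frac_le hq j m (e m) (he m) (Z m) (hZ m)) ((summable_mtM hq).mul_left 2))

lemma summable_mtR (hq : ‖q‖ < 1) (j : ℕ) : Summable (mtR q j) := by
  have := summable_QD hq j (fun m => 2*m^2+4*j*m) (fun m => by nlinarith)
    (fun m => 1 + q^(4*j+4*m+1)) (fun m => norm_one_add_le _ hq)
  exact this

lemma norm_tsum_mtL_le (hq : ‖q‖ < 1) (j : ℕ) : ‖∑' n, mtL q j n‖ ≤ ∑' n, mtM q n := by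
  have hs : Summable fun n => ‖mtL q j n‖ := Summable.of_nonneg_of_le
    (fun _ => norm_nonneg _) (fun n => norm_mtL_le hq j n) (summable_mtM hq)
  calc ‖∑' n, mtL q j n‖ ≤ ∑' n, ‖mtL q j n‖ := norm_tsum_le_tsum_norm hs
  _ ≤ ∑' n, mtM q n := Summable.tsum_le_tsum (fun n => norm_mtL_le hq j n) hs (summable_mtM hq)

lemma norm_tsum_mtR_le (hq : ‖q‖ < 1) (j : ℕ) :
    ‖∑' m, mtR q j m‖ ≤ 2 * ∑' n, mtM q n := by
  have hb : ∀ m, ‖mtR q j m‖ ≤ 2 * mtM q m := by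
    intro m
    have := norm_frac_le hq j m (2*m^2+4*j*m) (by nlinarith) (1 + q^(4*j+4*m+1))
      (norm_one_add_le _ hq)
    simpa [mtR] using this
  have hs : Summable fun m => ‖mtR q j m‖ := Summable.of_nonneg_of_le
    (fun _ => norm_nonneg _) hb ((summable_mtM hq).mul_left 2)
  calc ‖∑' m, mtR q j m‖ ≤ ∑' m, ‖mtR q j m‖ := norm_tsum_le_tsum_norm hs
  _ ≤ ∑' m, 2 * mtM q m := Summable.tsum_le_tsum hb hs ((summable_mtM hq).mul_left 2)
  _ = 2 * ∑' n, mtM q n := tsum_mul_left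

/-! ### Functional equations -/

lemma mtL_zero (j : ℕ) : mtL q j 0 = 1 := by simp [mtL, mtP, mtD]

lemma mtH_zero (j : ℕ) : mtH q j 0 = (1 + q^(4*j+4)) * (1 + q^(4*j+1)) := by
  simp [mtH, mtL_zero]

lemma mtR_zero (j : ℕ) : mtR q j 0 = 1 + q^(4*j+1) := by simp [mtR, mtQ, mtD]

lemma FE_L (hq : ‖q‖ < 1) (j : ℕ) :
    (1 + q^(4*j+4)) * ∑' n, mtL q j n
      = (1 + q^(4*j+4)) * (1 + q^(4*j+1))
        + q^(4*j+2) * (1 + q^(4*j+2)) * ∑' n, mtL q (j+1) n := by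
  have hL1 : Summable (mtL q (j+1)) := summable_mtL hq (j+1)
  have hH : Summable (mtH q j) := summable_mtH hq j
  have hH1 : Summable (fun n => mtH q j (n+1)) := (summable_nat_add_iff 1).2 hH
  calc (1 + q^(4*j+4)) * ∑' n, mtL q j n
      = ∑' n, (1 + q^(4*j+4)) * mtL q j n := tsum_mul_left.symm
  _ = ∑' n, (q^(4*j+2) * (1 + q^(4*j+2)) * mtL q (j+1) n + (mtH q j n - mtH q j (n+1))) :=
      tsum_congr (certL hq j)
  _ = (∑' n, q^(4*j+2) * (1 + q^(4*j+2)) * mtL q (j+1) n)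
      + ∑' n, (mtH q j n - mtH q j (n+1)) :=
      Summable.tsum_add (hL1.mul_left _) (hH.sub hH1)
  _ = q^(4*j+2) * (1 + q^(4*j+2)) * (∑' n, mtL q (j+1) n)
      + ((∑' n, mtH q j n) - ∑' n, mtH q j (n+1)) := by
      rw [tsum_mul_left, Summable.tsum_sub hH hH1]
  _ = (1 + q^(4*j+4)) * (1 + q^(4*j+1))
        + q^(4*j+2) * (1 + q^(4*j+2)) * ∑' n, mtL q (j+1) n := by
      rw [Summable.tsum_eq_zero_add hH, mtH_zero]
      ring

lemma FE_R (hq : ‖q‖ < 1) (j : ℕ) :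
    (1 + q^(4*j+4)) * ∑' m, mtR q j m
      = (1 + q^(4*j+4)) * (1 + q^(4*j+1))
        + q^(4*j+2) * (1 + q^(4*j+2)) * ∑' m, mtR q (j+1) m := by
  have hR : Summable (mtR q j) := summable_mtR hq j
  have hR1 : Summable (mtR q (j+1)) := summable_mtR hq (j+1)
  have key : q^(4*j+2) * (1 + q^(4*j+2)) * ∑' m, mtR q (j+1) m
      = (1 + q^(4*j+4)) * ∑' m, mtR q j (m+1) := by
    rw [← tsum_mul_left, ← tsum_mul_left]
    exact tsum_congr (certR hq j)
  have h2 : (∑' m, mtR q j m) = mtR q j 0 + ∑' m, mtR q j (m+1) := Summable.tsum_eq_zero_add hR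
  rw [key, h2, mtR_zero]
  ring

/-! ### Iteration -/

lemma delta_rec (hq : ‖q‖ < 1) (j : ℕ) :
    (∑' n, mtL q j n) - ∑' m, mtR q j m
      = (q^(4*j+2) * (1 + q^(4*j+2)) * (((∑' n, mtL q (j+1) n) - ∑' m, mtR q (j+1) m)))
        / (1 + q^(4*j+4)) := by
  have hA : (1 : ℂ) + q ^ (4*j+4) ≠ 0 := one_add_pow_ne hq (by omega)
  rw [eq_div_iff hA]
  linear_combination (FE_L hq j) - (FE_R hq j)

lemma main_eq (hq : ‖q‖ < 1) : (∑' n, mtL q 0 n) = ∑' m, mtR q 0 m := by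
  set d : ℕ → ℂ := fun j => (∑' n, mtL q j n) - ∑' m, mtR q j m with hd
  set C : ℝ := 3 * ∑' n, mtM q n with hC
  have hMnn : (0:ℝ) ≤ ∑' n, mtM q n := tsum_nonneg (fun n => mtM_nonneg n hq)
  have hCnn : 0 ≤ C := by positivity
  have hdb : ∀ j, ‖d j‖ ≤ C := by
    intro j
    calc ‖d j‖ ≤ ‖∑' n, mtL q j n‖ + ‖∑' m, mtR q j m‖ := norm_sub_le _ _
    _ ≤ (∑' n, mtM q n) + 2 * ∑' n, mtM q n :=
      add_le_add (norm_tsum_mtL_le hq j) (norm_tsum_mtR_le hq j)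
    _ = C := by rw [hC]; ring
  have hbeta : ∀ j : ℕ, ‖q^(4*j+2) * (1 + q^(4*j+2)) / (1 + q^(4*j+4))‖
      ≤ ‖q‖^j * (2/(1-‖q‖^4)) := by
    intro j
    rw [norm_div, norm_mul, norm_pow]
    have h1 : ‖q‖^(4*j+2) * ‖(1:ℂ) + q^(4*j+2)‖ ≤ ‖q‖^j * 2 := by
      apply mul_le_mul _ (norm_one_add_le _ hq) (norm_nonneg _) (pow_nonneg (norm_nonneg q) j)
      exact pow_le_pow_of_le_one (norm_nonneg q) hq.le (by omega)
    calc ‖q‖^(4*j+2) * ‖(1:ℂ) + q^(4*j+2)‖ / ‖(1:ℂ) + q^(4*j+4)‖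
        ≤ ‖q‖^j * 2 / (1 - ‖q‖^4) :=
          div_le_div₀ (by positivity) h1 (den_pos hq) (norm_one_add_ge hq (by omega))
    _ = ‖q‖^j * (2/(1-‖q‖^4)) := by ring
  have hrec : ∀ j, d j = (q^(4*j+2) * (1 + q^(4*j+2)) / (1 + q^(4*j+4))) * d (j+1) := by
    intro j
    rw [hd]
    simp only []
    rw [delta_rec hq j]
    ring
  -- choose j₀
  have htend : Tendsto (fun j : ℕ => ‖q‖^j * (2/(1-‖q‖^4))) atTop (nhds 0) := by
    have := (tendsto_pow_atTop_nhds_zero_of_lt_one (norm_nonneg q) hq).mul_const (2/(1-‖q‖^4))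
    simpa using this
  obtain ⟨j₀, hj₀⟩ := eventually_atTop.1
    (htend.eventually_le_const (by norm_num : (0:ℝ) < 1/2))
  -- decay
  have hdec : ∀ K : ℕ, ∀ j : ℕ, j₀ ≤ j → ‖d j‖ ≤ (1/2)^K * C := by
    intro K
    induction K with
    | zero => intro j hj; simpa using hdb j
    | succ K ih =>
      intro j hj
      have h1 : ‖d j‖ = ‖q^(4*j+2) * (1 + q^(4*j+2)) / (1 + q^(4*j+4))‖ * ‖d (j+1)‖ := by
        rw [hrec j, norm_mul]
      rw [h1]
      have h2 : ‖q^(4*j+2) * (1 + q^(4*j+2)) / (1 + q^(4*j+4))‖ ≤ 1/2 :=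
        le_trans (hbeta j) (hj₀ j hj)
      calc ‖q^(4*j+2) * (1 + q^(4*j+2)) / (1 + q^(4*j+4))‖ * ‖d (j+1)‖
          ≤ (1/2) * ((1/2)^K * C) :=
            mul_le_mul h2 (ih (j+1) (by omega)) (norm_nonneg _) (by norm_num)
      _ = (1/2)^(K+1) * C := by ring
  have hzero : d j₀ = 0 := by
    have htend2 : Tendsto (fun K : ℕ => (1/2:ℝ)^K * C) atTop (nhds 0) := by
      have := (tendsto_pow_atTop_nhds_zero_of_lt_one (by norm_num : (0:ℝ) ≤ 1/2)
        (by norm_num : (1/2:ℝ) < 1)).mul_const C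
      simpa using this
    have hle : ‖d j₀‖ ≤ 0 := ge_of_tendsto' htend2 (fun K => hdec K j₀ le_rfl)
    simpa using norm_le_zero_iff.1 hle
  have hdown : ∀ k : ℕ, d (j₀ - k) = 0 := by
    intro k
    induction k with
    | zero => simpa using hzero
    | succ k ih =>
      rcases le_or_gt j₀ k with h | h
      · have he : j₀ - (k+1) = j₀ - k := by omega
        rw [he]; exact ih
      · have he : j₀ - (k+1) + 1 = j₀ - k := by omega
        have := hrec (j₀ - (k+1))
        rw [he, ih, mul_zero] at this
        exact this
  have h0 : d 0 = 0 := by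
    have := hdown j₀
    simpa using this
  have h1 : (∑' n, mtL q 0 n) - ∑' m, mtR q 0 m = 0 := h0
  exact sub_eq_zero.1 h1

end MT
end MTsec

theorem stmt16 (q : ℂ) (hq : ‖q‖ < 1) :
    (∑' n : ℕ, q ^ (n ^ 2) * qPoch (-q) (q ^ 2) n / qPoch (-q ^ 4) (q ^ 4) n)
      = (∑' n : ℕ, (q ^ 2) ^ (n ^ 2) * qPoch (-q ^ 2) (q ^ 4) n / qPoch (-q ^ 4) (q ^ 4) n)
        + q * (∑' n : ℕ, (q ^ 2) ^ (n * (n + 2)) * qPoch (-q ^ 2) (q ^ 4) n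
              / qPoch (-q ^ 4) (q ^ 4) n) := by
  have hP : ∀ n, qPoch (-q) (q^2) n = MT.mtP q n := by
    intro n
    unfold qPoch MT.mtP
    exact Finset.prod_congr rfl fun k _ => by ring
  have hD : ∀ n, qPoch (-q^4) (q^4) n = MT.mtD q 0 n := by
    intro n
    unfold qPoch MT.mtD
    exact Finset.prod_congr rfl fun k _ => by ring
  have hQ : ∀ n, qPoch (-q^2) (q^4) n = MT.mtQ q 0 n := by
    intro n
    unfold qPoch MT.mtQ
    exact Finset.prod_congr rfl fun k _ => by ring
  have hL : (∑' n : ℕ, q^(n^2) * qPoch (-q) (q^2) n / qPoch (-q^4) (q^4) n)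
      = ∑' n, MT.mtL q 0 n := by
    refine tsum_congr fun n => ?_
    rw [hP, hD, MT.mtL]
    norm_num
  have hsplit : ∀ m : ℕ, MT.mtR q 0 m
      = (q^2)^(m^2) * MT.mtQ q 0 m / MT.mtD q 0 m
        + q * ((q^2)^(m*(m+2)) * MT.mtQ q 0 m / MT.mtD q 0 m) := by
    intro m
    have hDm := MT.mtD_ne hq 0 m
    rw [MT.mtR]
    field_simp
    ring
  have hf : Summable (fun m => (q^2)^(m^2) * MT.mtQ q 0 m / MT.mtD q 0 m) := by
    have h := MT.summable_QD hq 0 (fun m => 2*m^2) (fun m => by nlinarith)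
      (fun _ => 1) (fun _ => by norm_num)
    refine h.congr fun m => ?_
    rw [mul_one, pow_mul]
  have hg : Summable (fun m => (q^2)^(m*(m+2)) * MT.mtQ q 0 m / MT.mtD q 0 m) := by
    have h := MT.summable_QD hq 0 (fun m => 2*(m*(m+2))) (fun m => by nlinarith)
      (fun _ => 1) (fun _ => by norm_num)
    refine h.congr fun m => ?_
    rw [mul_one, pow_mul]
  have hR0 : (∑' m, MT.mtR q 0 m)
      = (∑' m, (q^2)^(m^2) * MT.mtQ q 0 m / MT.mtD q 0 m)
        + q * ∑' m, (q^2)^(m*(m+2)) * MT.mtQ q 0 m / MT.mtD q 0 m := by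
    rw [tsum_congr hsplit, Summable.tsum_add hf (hg.mul_left q), tsum_mul_left]
  rw [hL, MT.main_eq hq, hR0]
  congr 1
  · exact tsum_congr fun m => by rw [hQ, hD]
  · congr 1
    exact tsum_congr fun m => by rw [hQ, hD]
end
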